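/- Let C be a finite set of cardinality L·M (L, M positive integers), Z a finite set, P_{Z|X} a channel from C to Z, and P_Z(z) := (1/|C|)·Σ_{x∈C} P_{Z|X}(z|x). Let P_e : C → [0,1] be any function with (1/|C|)·Σ_{x∈C} P_e(x) = ε₀, and let G be uniformly distributed over the set of all functions g : C → {1,...,M} with |g⁻¹(m)| = L for every m. Then for every r > 0, P[ { max_m d(P_{Z|G⁻¹(m)}, P_Z) ≥ r + μ } ∪ { max_m (1/L)·Σ_{x∈G⁻¹(m)} P_e(x) ≥ r + ε₀ } ] ≤ 2M·e^{−2Lr²}, where μ := E[ d(P_{Z|𝒜}, P_Z) ] with 𝒜 = (X̄₁,...,X̄_L) i.i.d. uniform on C and P_{Z|𝒜}(z) := (1/L)·Σᵢ P_{Z|X}(z|X̄ᵢ). -/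

import Mathlib

open Finset
open scoped Classical

noncomputable section

/-- Total variation distance between two finitely supported distributions. -/
def tv {A : Type*} [Fintype A] (P Q : A → ℝ) : ℝ := (1 / 2) * ∑ a, |P a - Q a|

section AuxAnalysis

/-- `2(e^g - 1) ≤ g(e^g + 1)` for `g ≥ 0`. -/
lemma auxH {g : ℝ} (hg : 0 ≤ g) : 2 * (Real.exp g - 1) ≤ g * (Real.exp g + 1) := by
  set H : ℝ → ℝ := fun x => x * Real.exp x + x - 2 * Real.exp x + 2 with hH
  have hd : ∀ x : ℝ, HasDerivAt H (x * Real.exp x - Real.exp x + 1) x := by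
    intro x
    have h1 : HasDerivAt (fun x : ℝ => x * Real.exp x) (1 * Real.exp x + x * Real.exp x) x :=
      (hasDerivAt_id x).mul (Real.hasDerivAt_exp x)
    have h2 : HasDerivAt H (1 * Real.exp x + x * Real.exp x + 1 - 2 * Real.exp x + 0) x := by
      exact (((h1.add (hasDerivAt_id x)).sub ((Real.hasDerivAt_exp x).const_mul 2)).add
        (hasDerivAt_const x 2))
    convert h2 using 1; ring
  have hmono : Monotone H := by
    apply monotone_of_deriv_nonneg (fun x => (hd x).differentiableAt)
    intro x
    rw [(hd x).deriv]
    have h3 : (1 - x) ≤ Real.exp (-x) := by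
      have := Real.add_one_le_exp (-x); linarith
    have h4 : (1 - x) * Real.exp x ≤ 1 := by
      calc (1 - x) * Real.exp x ≤ Real.exp (-x) * Real.exp x :=
            mul_le_mul_of_nonneg_right h3 (Real.exp_pos x).le
        _ = 1 := by rw [← Real.exp_add]; simp
    nlinarith
  have h0 : H 0 = 0 := by simp [hH]
  have := hmono hg
  rw [h0] at this
  simp only [hH] at this
  nlinarith

/-- Core inequality for the sign of the derivative in Hoeffding's lemma. -/
lemma auxCore {α h : ℝ} (h0 : 0 ≤ α) (h1 : α ≤ 1) (hh : 0 ≤ h) :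
    4 * α * (1 - α) * (Real.exp h - 1) ≤ h * (1 - α + α * Real.exp h) := by
  set v := Real.exp (h / 2) with hv
  have hv1 : 1 ≤ v := by
    rw [hv]; simpa using Real.one_le_exp (by linarith : (0:ℝ) ≤ h / 2)
  have hE : Real.exp h = v ^ 2 := by
    rw [hv, sq, ← Real.exp_add]; congr 1; ring
  -- step 1 : α(1-α)(v²-1)(v+1) ≤ (v-1)(1-α+αv²)
  have s1 : α * (1 - α) * (v ^ 2 - 1) * (v + 1) ≤ (v - 1) * (1 - α + α * v ^ 2) := by
    nlinarith [mul_nonneg (sub_nonneg.2 hv1) (sq_nonneg (α * v + α - 1))]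
  -- step 2 : 4(v-1) ≤ h(v+1)
  have s2 : 4 * (v - 1) ≤ h * (v + 1) := by
    have := auxH (by linarith : (0:ℝ) ≤ h / 2)
    rw [← hv] at this; linarith
  have hD : 0 ≤ 1 - α + α * v ^ 2 := by nlinarith
  have hvpos : 0 < v + 1 := by linarith
  rw [hE]
  have key : 4 * (α * (1 - α) * (v ^ 2 - 1)) * (v + 1) ≤ h * (1 - α + α * v ^ 2) * (v + 1) := by
    calc 4 * (α * (1 - α) * (v ^ 2 - 1)) * (v + 1)
        ≤ 4 * (v - 1) * (1 - α + α * v ^ 2) := by nlinarith [s1]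
      _ ≤ h * (v + 1) * (1 - α + α * v ^ 2) := mul_le_mul_of_nonneg_right s2 hD
      _ = h * (1 - α + α * v ^ 2) * (v + 1) := by ring
  have := le_of_mul_le_mul_right (by linarith [key] : (4 * α * (1 - α) * (v ^ 2 - 1)) * (v+1) ≤ (h * (1 - α + α * v ^ 2)) * (v+1)) hvpos
  exact this

/-- Hoeffding's key inequality: `1 - α + α e^h ≤ exp(α h + h²/8)` for `α ∈ [0,1]`. -/
lemma auxKey {α : ℝ} (h0 : 0 ≤ α) (h1 : α ≤ 1) (h : ℝ) :
    1 - α + α * Real.exp h ≤ Real.exp (α * h + h ^ 2 / 8) := by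
  set D : ℝ → ℝ := fun x => 1 - α + α * Real.exp x with hDdef
  have hD : ∀ x, 0 < D x := by
    intro x
    simp only [hDdef]
    rcases le_or_gt 1 (Real.exp x) with hx | hx
    · nlinarith [mul_le_mul_of_nonneg_left hx h0]
    · nlinarith [Real.exp_pos x, mul_le_mul_of_nonneg_left hx.le h0]
  set F : ℝ → ℝ := fun x => α * x + x ^ 2 / 8 - Real.log (D x) with hFdef
  have hd : ∀ x : ℝ, HasDerivAt F (α + x / 4 - α * Real.exp x / D x) x := by
    intro x
    have hD' : HasDerivAt D (α * Real.exp x) x := by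
      exact ((Real.hasDerivAt_exp x).const_mul α).const_add (1 - α)
    have hlog : HasDerivAt (fun x => Real.log (D x)) (α * Real.exp x / D x) x :=
      hD'.log (hD x).ne'
    have h2 : HasDerivAt (fun x : ℝ => α * x + x ^ 2 / 8) (α + x / 4) x := by
      have := ((hasDerivAt_pow 2 x).div_const 8).const_add 0
      have h3 : HasDerivAt (fun x : ℝ => α * x) α x := by
        simpa using (hasDerivAt_id x).const_mul α
      have h4 := h3.add ((hasDerivAt_pow 2 x).div_const 8)
      exact h4.congr_deriv (by rw [show (2:ℕ) - 1 = 1 from rfl, pow_one]; ring)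
    exact h2.sub hlog
  -- sign of derivative
  have sign_pos : ∀ x : ℝ, 0 ≤ x → 0 ≤ α + x / 4 - α * Real.exp x / D x := by
    intro x hx
    rw [sub_nonneg, div_le_iff₀ (hD x)]
    have := auxCore h0 h1 hx
    simp only [hDdef]
    nlinarith [this]
  have sign_neg : ∀ x : ℝ, x ≤ 0 → α + x / 4 - α * Real.exp x / D x ≤ 0 := by
    intro x hx
    rw [sub_nonpos, le_div_iff₀ (hD x)]
    have core := auxCore (by linarith : (0:ℝ) ≤ 1 - α) (by linarith : 1 - α ≤ 1)
      (by linarith : 0 ≤ -x)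
    have hEpos := Real.exp_pos x
    rw [Real.exp_neg] at core
    have h6 := mul_le_mul_of_nonneg_right core hEpos.le
    have h7 : (Real.exp x)⁻¹ * Real.exp x = 1 := inv_mul_cancel₀ hEpos.ne'
    have e1 : 4 * (1 - α) * (1 - (1 - α)) * ((Real.exp x)⁻¹ - 1) * Real.exp x
        = 4 * α * (1 - α) * (1 - Real.exp x) := by
      linear_combination (4 * α * (1 - α)) * h7
    have e2 : -x * (1 - (1 - α) + (1 - α) * (Real.exp x)⁻¹) * Real.exp x
        = -x * (α * Real.exp x + (1 - α)) := by
      linear_combination (-x * (1 - α)) * h7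
    rw [e1, e2] at h6
    simp only [hDdef]
    nlinarith [h6]
  have hF0 : F 0 = 0 := by simp [hFdef, hDdef]
  have hFnonneg : ∀ x : ℝ, 0 ≤ F x := by
    intro x
    rcases le_or_gt 0 x with hx | hx
    · have hmono : MonotoneOn F (Set.Ici 0) := by
        apply monotoneOn_of_deriv_nonneg (convex_Ici 0)
          (fun y _ => (hd y).differentiableAt.continuousAt.continuousWithinAt)
          (fun y _ => (hd y).differentiableAt.differentiableWithinAt)
        intro y hy
        rw [(hd y).deriv]
        exact sign_pos y (le_of_lt (by simpa using hy))
      have := hmono (Set.self_mem_Ici) (Set.mem_Ici.2 hx) hx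
      linarith [hF0 ▸ this]
    · have hanti : AntitoneOn F (Set.Iic 0) := by
        apply antitoneOn_of_deriv_nonpos (convex_Iic 0)
          (fun y _ => (hd y).differentiableAt.continuousAt.continuousWithinAt)
          (fun y _ => (hd y).differentiableAt.differentiableWithinAt)
        intro y hy
        rw [(hd y).deriv]
        exact sign_neg y (le_of_lt (by simpa using hy))
      have := hanti (Set.mem_Iic.2 hx.le) (Set.self_mem_Iic) hx.le
      linarith [hF0 ▸ this]
  have := hFnonneg h
  simp only [hFdef] at this
  have hlog : Real.log (D h) ≤ α * h + h ^ 2 / 8 := by linarith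
  calc D h = Real.exp (Real.log (D h)) := (Real.exp_log (hD h)).symm
    _ ≤ Real.exp (α * h + h ^ 2 / 8) := Real.exp_le_exp.2 hlog

/-- Hoeffding's lemma for a uniform average on a finite type. -/
lemma auxHoeff {ι : Type*} [Fintype ι] [Nonempty ι] (X : ι → ℝ) (c s : ℝ) (hc : 0 ≤ c)
    (h0 : ∑ i, X i = 0) (hosc : ∀ a b, X a - X b ≤ c) :
    ∑ i, Real.exp (s * X i) ≤ (Fintype.card ι : ℝ) * Real.exp (s ^ 2 * c ^ 2 / 8) := by
  have hcardpos : (0:ℝ) < (Fintype.card ι : ℝ) := by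
    exact_mod_cast Fintype.card_pos
  obtain ⟨a, -, ha⟩ := Finset.exists_min_image univ X ⟨Classical.arbitrary ι, mem_univ _⟩
  obtain ⟨b, -, hb⟩ := Finset.exists_max_image univ X ⟨Classical.arbitrary ι, mem_univ _⟩
  set p := X a with hp
  set q := X b with hq
  have hple : ∀ i, p ≤ X i := fun i => ha i (mem_univ i)
  have hqge : ∀ i, X i ≤ q := fun i => hb i (mem_univ i)
  have hp0 : p ≤ 0 := by
    by_contra hcon
    push_neg at hcon
    have : 0 < ∑ i, X i := by
      calc (0:ℝ) < ∑ _i : ι, p := by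
            rw [Finset.sum_const, nsmul_eq_mul]
            positivity
        _ ≤ ∑ i, X i := Finset.sum_le_sum (fun i _ => hple i)
    linarith [h0 ▸ this]
  have hq0 : 0 ≤ q := by
    by_contra hcon
    push_neg at hcon
    have : ∑ i, X i < 0 := by
      calc ∑ i, X i ≤ ∑ _i : ι, q := Finset.sum_le_sum (fun i _ => hqge i)
        _ < 0 := by
            rw [Finset.sum_const, nsmul_eq_mul, Finset.card_univ]
            nlinarith
    linarith [h0 ▸ this]
  have hqpc : q - p ≤ c := hosc b a
  rcases le_or_gt q p with hqp | hqp
  · -- degenerate: all X i = 0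
    have hX : ∀ i, X i = 0 := fun i => le_antisymm (by linarith [hqge i]) (by linarith [hple i])
    have : ∀ i : ι, Real.exp (s * X i) = 1 := by intro i; rw [hX i]; simp
    rw [Finset.sum_congr rfl (fun i _ => this i), Finset.sum_const, nsmul_eq_mul,
      Finset.card_univ]
    have h1 : (1:ℝ) ≤ Real.exp (s ^ 2 * c ^ 2 / 8) := Real.one_le_exp (by positivity)
    nlinarith
  · have hne : q - p ≠ 0 := by linarith
    -- pointwise convexity bound
    have key : ∀ i, Real.exp (s * X i) ≤
        ((q - X i) * Real.exp (s * p) + (X i - p) * Real.exp (s * q)) / (q - p) := by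
      intro i
      have l1 : (0:ℝ) ≤ (q - X i) / (q - p) := by
        apply div_nonneg (by linarith [hqge i]) (by linarith)
      have l2 : (0:ℝ) ≤ (X i - p) / (q - p) := by
        apply div_nonneg (by linarith [hple i]) (by linarith)
      have l3 : (q - X i) / (q - p) + (X i - p) / (q - p) = 1 := by
        field_simp
        ring
      have hcx := convexOn_exp.2 (Set.mem_univ (s * p)) (Set.mem_univ (s * q)) l1 l2 l3
      simp only [smul_eq_mul] at hcx
      have l4 : (q - X i) / (q - p) * (s * p) + (X i - p) / (q - p) * (s * q) = s * X i := by
        field_simp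
        ring
      rw [l4] at hcx
      calc Real.exp (s * X i) ≤
            (q - X i) / (q - p) * Real.exp (s * p) + (X i - p) / (q - p) * Real.exp (s * q) := hcx
        _ = ((q - X i) * Real.exp (s * p) + (X i - p) * Real.exp (s * q)) / (q - p) := by ring
    -- sum up
    have sum1 : ∑ i, Real.exp (s * X i) ≤
        (Fintype.card ι : ℝ) * ((q * Real.exp (s * p) - p * Real.exp (s * q)) / (q - p)) := by
      calc ∑ i, Real.exp (s * X i)
          ≤ ∑ i, ((q - X i) * Real.exp (s * p) + (X i - p) * Real.exp (s * q)) / (q - p) :=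
            Finset.sum_le_sum (fun i _ => key i)
        _ = ((∑ i, (q - X i)) * Real.exp (s * p) + (∑ i, (X i - p)) * Real.exp (s * q)) / (q - p) := by
            rw [← Finset.sum_div]
            congr 1
            rw [Finset.sum_add_distrib, ← Finset.sum_mul, ← Finset.sum_mul]
        _ = (Fintype.card ι : ℝ) * ((q * Real.exp (s * p) - p * Real.exp (s * q)) / (q - p)) := by
            rw [Finset.sum_sub_distrib, Finset.sum_sub_distrib, Finset.sum_const, Finset.sum_const,
              h0, nsmul_eq_mul, nsmul_eq_mul, Finset.card_univ]
            ring
    -- two-point bound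
    set α : ℝ := -p / (q - p) with hα
    set h : ℝ := s * (q - p) with hh
    have hα0 : 0 ≤ α := div_nonneg (by linarith) (by linarith)
    have hα1 : α ≤ 1 := by
      rw [hα, div_le_one (by linarith : (0:ℝ) < q - p)]
      linarith
    have hkey := auxKey hα0 hα1 h
    have e3 : Real.exp (s * q) = Real.exp h * Real.exp (s * p) := by
      rw [← Real.exp_add]; congr 1; rw [hh]; ring
    have e4 : Real.exp (s * p) = Real.exp (-(α * h)) := by
      congr 1
      rw [hα, hh]
      field_simp
    have e5 : (q * Real.exp (s * p) - p * Real.exp (s * q)) / (q - p)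
        = Real.exp (-(α * h)) * (1 - α + α * Real.exp h) := by
      rw [e3, e4]
      rw [hα]
      field_simp
      ring
    have e6 : Real.exp (-(α * h)) * (1 - α + α * Real.exp h)
        ≤ Real.exp (h ^ 2 / 8) := by
      calc Real.exp (-(α * h)) * (1 - α + α * Real.exp h)
          ≤ Real.exp (-(α * h)) * Real.exp (α * h + h ^ 2 / 8) :=
            mul_le_mul_of_nonneg_left hkey (Real.exp_pos _).le
        _ = Real.exp (h ^ 2 / 8) := by rw [← Real.exp_add]; congr 1; ring
    have e7 : Real.exp (h ^ 2 / 8) ≤ Real.exp (s ^ 2 * c ^ 2 / 8) := by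
      apply Real.exp_le_exp.2
      rw [hh]
      have h8 : (q - p) ^ 2 ≤ c ^ 2 := by nlinarith
      nlinarith [sq_nonneg s, mul_le_mul_of_nonneg_left h8 (sq_nonneg s)]
    calc ∑ i, Real.exp (s * X i)
        ≤ (Fintype.card ι : ℝ) * ((q * Real.exp (s * p) - p * Real.exp (s * q)) / (q - p)) := sum1
      _ = (Fintype.card ι : ℝ) * (Real.exp (-(α * h)) * (1 - α + α * Real.exp h)) := by rw [e5]
      _ ≤ (Fintype.card ι : ℝ) * Real.exp (h ^ 2 / 8) :=
          mul_le_mul_of_nonneg_left e6 hcardpos.le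
      _ ≤ (Fintype.card ι : ℝ) * Real.exp (s ^ 2 * c ^ 2 / 8) :=
          mul_le_mul_of_nonneg_left e7 hcardpos.le

/-- McDiarmid-type MGF bound (tensorization) for the uniform product measure. -/
lemma auxTensor {C : Type*} [Fintype C] [Nonempty C] (c s : ℝ) (hc : 0 ≤ c) :
    ∀ (L : ℕ) (f : (Fin L → C) → ℝ),
    (∀ (v : Fin L → C) (i : Fin L) (a : C), f v - f (Function.update v i a) ≤ c) →
    ∑ v : Fin L → C, Real.exp (s * f v) ≤
      (Fintype.card C : ℝ) ^ L *
        Real.exp (s * (((Fintype.card C : ℝ) ^ L)⁻¹ * ∑ v : Fin L → C, f v)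
          + s ^ 2 * L * c ^ 2 / 8) := by
  have hcard : (0:ℝ) < (Fintype.card C : ℝ) := by exact_mod_cast Fintype.card_pos
  intro L
  induction L with
  | zero =>
    intro f _
    haveI : Unique (Fin 0 → C) := ⟨⟨fun i => i.elim0⟩, fun v => funext fun i => i.elim0⟩
    rw [Fintype.sum_unique, Fintype.sum_unique]
    simp
  | succ L IH =>
    intro f hf
    set n : ℝ := (Fintype.card C : ℝ) with hn
    set g : (Fin L → C) → ℝ := fun w => n⁻¹ * ∑ x : C, f (Fin.cons x w) with hg
    -- osc bound for g
    have hgosc : ∀ (w : Fin L → C) (i : Fin L) (a : C), g w - g (Function.update w i a) ≤ c := by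
      intro w i a
      have e1 : g w - g (Function.update w i a)
          = n⁻¹ * ∑ x : C, (f (Fin.cons x w) - f (Fin.cons x (Function.update w i a))) := by
        rw [hg]
        simp only [Finset.sum_sub_distrib, mul_sub]
      rw [e1]
      have e2 : ∀ x : C, f (Fin.cons x w) - f (Fin.cons x (Function.update w i a)) ≤ c := by
        intro x
        rw [Fin.cons_update]
        exact hf _ _ _
      calc n⁻¹ * ∑ x : C, (f (Fin.cons x w) - f (Fin.cons x (Function.update w i a)))
          ≤ n⁻¹ * ∑ _x : C, c := by
            apply mul_le_mul_of_nonneg_left (Finset.sum_le_sum (fun x _ => e2 x))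
            positivity
        _ = c := by
            rw [Finset.sum_const, nsmul_eq_mul, Finset.card_univ, ← hn]
            field_simp
    -- per-w Hoeffding
    have hw : ∀ w : Fin L → C,
        ∑ x : C, Real.exp (s * (f (Fin.cons x w) - g w)) ≤ n * Real.exp (s ^ 2 * c ^ 2 / 8) := by
      intro w
      apply auxHoeff _ c s hc
      · rw [Finset.sum_sub_distrib, Finset.sum_const, nsmul_eq_mul, Finset.card_univ, ← hn, hg]
        field_simp
        ring
      · intro x y
        have heq : (Function.update (Fin.cons x w : Fin (L+1) → C) (0 : Fin (L+1)) y)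
            = Fin.cons y w := by
          have := @Fin.update_cons_zero L (fun _ => C) x w y
          exact this
        have h9 := hf (Fin.cons x w) (0 : Fin (L+1)) y
        rw [heq] at h9
        linarith
    -- split the sum
    have esplit : ∀ (F : (Fin (L+1) → C) → ℝ),
        ∑ v : Fin (L+1) → C, F v = ∑ w : Fin L → C, ∑ x : C, F (Fin.cons x w) := by
      intro F
      rw [Fintype.sum_equiv ((Fin.consEquiv (fun _ : Fin (L+1) => C)).symm) F
        (fun p => F (Fin.cons p.1 p.2))
        (fun v => by
          congr 1
          exact (Fin.cons_self_tail v).symm)]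
      rw [Fintype.sum_prod_type]
      exact Finset.sum_comm
    have emean : ∑ w : Fin L → C, g w = n⁻¹ * ∑ v : Fin (L+1) → C, f v := by
      rw [esplit f, hg]
      rw [Finset.mul_sum]
    calc ∑ v : Fin (L+1) → C, Real.exp (s * f v)
        = ∑ w : Fin L → C, ∑ x : C, Real.exp (s * f (Fin.cons x w)) := esplit _
      _ = ∑ w : Fin L → C, Real.exp (s * g w) * ∑ x : C, Real.exp (s * (f (Fin.cons x w) - g w)) := by
          apply Finset.sum_congr rfl
          intro w _
          rw [Finset.mul_sum]
          apply Finset.sum_congr rfl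
          intro x _
          rw [← Real.exp_add]
          congr 1
          ring
      _ ≤ ∑ w : Fin L → C, Real.exp (s * g w) * (n * Real.exp (s ^ 2 * c ^ 2 / 8)) := by
          apply Finset.sum_le_sum
          intro w _
          exact mul_le_mul_of_nonneg_left (hw w) (Real.exp_pos _).le
      _ = (n * Real.exp (s ^ 2 * c ^ 2 / 8)) * ∑ w : Fin L → C, Real.exp (s * g w) := by
          rw [← Finset.sum_mul]; ring
      _ ≤ (n * Real.exp (s ^ 2 * c ^ 2 / 8)) *
            (n ^ L * Real.exp (s * ((n ^ L)⁻¹ * ∑ w : Fin L → C, g w) + s ^ 2 * L * c ^ 2 / 8)) := by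
          apply mul_le_mul_of_nonneg_left (IH g hgosc)
          positivity
      _ = n ^ (L+1) *
            Real.exp (s * ((n ^ (L+1))⁻¹ * ∑ v : Fin (L+1) → C, f v) + s ^ 2 * (L+1) * c ^ 2 / 8) := by
          rw [emean]
          have hA : (n ^ L)⁻¹ * (n⁻¹ * ∑ v : Fin (L+1) → C, f v)
              = (n ^ (L+1))⁻¹ * ∑ v : Fin (L+1) → C, f v := by
            rw [pow_succ, mul_inv]; ring
          rw [hA]
          rw [show n * Real.exp (s ^ 2 * c ^ 2 / 8) *
              (n ^ L * Real.exp (s * ((n ^ (L+1))⁻¹ * ∑ v : Fin (L+1) → C, f v)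
                + s ^ 2 * ↑L * c ^ 2 / 8))
            = n ^ (L+1) * (Real.exp (s ^ 2 * c ^ 2 / 8) *
              Real.exp (s * ((n ^ (L+1))⁻¹ * ∑ v : Fin (L+1) → C, f v)
                + s ^ 2 * ↑L * c ^ 2 / 8)) from by rw [pow_succ]; ring]
          congr 1
          rw [← Real.exp_add]
          congr 1
          push_cast
          ring
      _ = n ^ (L+1) *
            Real.exp (s * ((n ^ (L+1))⁻¹ * ∑ v : Fin (L+1) → C, f v)
              + s ^ 2 * (((L+1 : ℕ)) : ℝ) * c ^ 2 / 8) := by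
          congr 2
          push_cast
          ring

end AuxAnalysis

section AuxComb
variable {C : Type*} [Fintype C] [DecidableEq C]

/-- The finset of injective tuples `Fin k → C`. -/
def Ik (C : Type*) [Fintype C] (k : ℕ) : Finset (Fin k → C) :=
  univ.filter Function.Injective

lemma mem_Ik {k : ℕ} {x : Fin k → C} : x ∈ Ik C k ↔ Function.Injective x := by
  simp [Ik]

/-- weighted empirical vector -/
def vece {k : ℕ} (α : Fin k → ℕ) (x : Fin k → C) : C → ℝ :=
  fun c => ∑ i, (α i : ℝ) * (if x i = c then 1 else 0)

/-- counting vector of a tuple -/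
def cnte {t : ℕ} (u : Fin t → C) : C → ℝ :=
  fun c => ∑ i, (if u i = c then (1:ℝ) else 0)

lemma vece_one {k : ℕ} (x : Fin k → C) : vece (fun _ => 1) x = cnte x := by
  funext c; simp [vece, cnte]

/-- Splitting the sum over injective `(k+1)`-tuples. -/
lemma auxBIJ {k : ℕ} (F : (Fin (k+1) → C) → ℝ) :
    ∑ y ∈ Ik C (k+1), F y
      = ∑ x ∈ Ik C k, ∑ c ∈ univ \ Finset.image x univ, F (Fin.cons c x) := by
  rw [← Finset.sum_sigma (Ik C k) (fun x => univ \ Finset.image x univ)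
    (fun p => F (Fin.cons p.2 p.1))]
  refine Finset.sum_nbij' (fun y => (⟨Fin.tail y, y 0⟩ :
      Σ _x : Fin k → C, C)) (fun p => Fin.cons p.2 p.1) ?_ ?_ ?_ ?_ ?_
  · intro y hy
    rw [mem_Ik] at hy
    rw [Finset.mem_sigma]
    constructor
    · rw [mem_Ik]
      intro a b hab
      have := hy hab
      exact Fin.succ_injective _ this
    · rw [Finset.mem_sdiff]
      refine ⟨Finset.mem_univ _, ?_⟩
      rw [Finset.mem_image]
      rintro ⟨i, -, hi⟩
      have h9 := hy (show y i.succ = y 0 from hi)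
      exact absurd h9 (Fin.succ_ne_zero i)
  · intro p hp
    rw [Finset.mem_sigma, mem_Ik, Finset.mem_sdiff, Finset.mem_image] at hp
    obtain ⟨hinj, -, himg⟩ := hp
    rw [mem_Ik]
    intro a b hab
    rcases Fin.eq_zero_or_eq_succ a with rfl | ⟨a', rfl⟩ <;>
      rcases Fin.eq_zero_or_eq_succ b with rfl | ⟨b', rfl⟩
    · rfl
    · simp only [Fin.cons_zero, Fin.cons_succ] at hab
      exact absurd ⟨b', Finset.mem_univ _, hab.symm⟩ himg
    · simp only [Fin.cons_zero, Fin.cons_succ] at hab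
      exact absurd ⟨a', Finset.mem_univ _, hab⟩ himg
    · simp only [Fin.cons_succ] at hab
      rw [hinj hab]
  · intro y _
    exact Fin.cons_self_tail y
  · intro p _
    cases p with
    | mk x c => simp [Fin.tail_cons]
  · intro y _
    exact (congrArg F (Fin.cons_self_tail y)).symm

lemma auxInonempty {k : ℕ} (hk : k ≤ Fintype.card C) : (Ik C k).Nonempty := by
  have : Fintype.card (Fin k) ≤ Fintype.card C := by simpa using hk
  obtain ⟨e⟩ := Function.Embedding.nonempty_of_card_le this
  exact ⟨e, mem_Ik.2 e.injective⟩

lemma auxPERM {k : ℕ} (σ : Equiv.Perm (Fin k)) (F : (Fin k → C) → ℝ) :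
    ∑ y ∈ Ik C k, F (y ∘ σ) = ∑ y ∈ Ik C k, F y := by
  apply Finset.sum_nbij' (fun y => y ∘ σ) (fun y => y ∘ σ.symm)
  · intro y hy
    exact mem_Ik.2 ((mem_Ik.1 hy).comp σ.injective)
  · intro y hy
    exact mem_Ik.2 ((mem_Ik.1 hy).comp σ.symm.injective)
  · intro y _
    funext i; simp
  · intro y _
    funext i; simp
  · intro y _
    rfl

/-- Sum over `(k+1)`-injective tuples of a function of the tail. -/
lemma auxTailSum {k : ℕ} (G : (Fin k → C) → ℝ) :
    ∑ y ∈ Ik C (k+1), G (Fin.tail y)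
      = ((Fintype.card C - k : ℕ) : ℝ) * ∑ x ∈ Ik C k, G x := by
  rw [auxBIJ (fun y => G (Fin.tail y)), Finset.mul_sum]
  refine Finset.sum_congr rfl fun x hx => ?_
  have hcard : (univ \ Finset.image x univ).card = Fintype.card C - k := by
    rw [Finset.card_sdiff_of_subset (Finset.subset_univ _), Finset.card_univ,
      Finset.card_image_of_injective _ (mem_Ik.1 hx), Finset.card_univ, Fintype.card_fin]
  have hc : ∀ c ∈ univ \ Finset.image x univ, G (Fin.tail (Fin.cons c x : Fin (k+1) → C)) = G x :=
    fun c _ => by rw [Fin.tail_cons]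
  rw [Finset.sum_congr rfl hc, Finset.sum_const, nsmul_eq_mul, hcard]

lemma auxIcard {k : ℕ} :
    ((Ik C (k+1)).card : ℝ) = ((Fintype.card C - k : ℕ) : ℝ) * ((Ik C k).card : ℝ) := by
  have h1 : ((Ik C (k+1)).card : ℝ) = ∑ y ∈ Ik C (k+1), (1:ℝ) := by simp
  have h2 := auxTailSum (C := C) (k := k) (fun _ => (1:ℝ))
  rw [h1, h2]
  simp

/-- The splitting identity. -/
lemma auxSPLITID {k : ℕ} (α : Fin k → ℕ) (j : Fin k) (hj : 1 ≤ α j) (y : Fin (k+1) → C) :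
    vece (Fin.cons 1 (Function.update α j (α j - 1))) y
      = fun c => (((α j : ℝ) - 1) / (α j)) * vece α (Fin.tail y) c
          + (1 - (((α j : ℝ) - 1) / (α j))) * vece α (Fin.tail (y ∘ Equiv.swap 0 j.succ)) c := by
  have hm : (0:ℝ) < (α j : ℝ) := by exact_mod_cast hj
  funext c
  simp only [vece]
  rw [Fin.sum_univ_succ]
  simp only [Fin.cons_zero, Fin.cons_succ, Nat.cast_one]
  rw [Finset.sum_eq_add_sum_sdiff_singleton_of_mem (Finset.mem_univ j)
    (fun i => ((Function.update α j (α j - 1) i : ℕ) : ℝ) * (if y i.succ = c then 1 else 0))]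
  have e1 : ∑ i ∈ univ \ {j}, ((Function.update α j (α j - 1) i : ℕ) : ℝ) *
      (if y i.succ = c then 1 else 0)
      = ∑ i ∈ univ \ {j}, ((α i : ℕ) : ℝ) * (if y i.succ = c then 1 else 0) := by
    apply Finset.sum_congr rfl
    intro i hi
    rw [Finset.mem_sdiff, Finset.mem_singleton] at hi
    rw [Function.update_of_ne hi.2]
  rw [e1, Function.update_self]
  -- now expand the two tails on the RHS
  have e2 : ∑ i : Fin k, ((α i : ℕ) : ℝ) * (if Fin.tail y i = c then 1 else 0)
      = ((α j : ℝ)) * (if y j.succ = c then 1 else 0)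
        + ∑ i ∈ univ \ {j}, ((α i : ℕ) : ℝ) * (if y i.succ = c then 1 else 0) := by
    rw [Finset.sum_eq_add_sum_sdiff_singleton_of_mem (Finset.mem_univ j)]
    rfl
  have e3 : ∑ i : Fin k, ((α i : ℕ) : ℝ) * (if Fin.tail (y ∘ Equiv.swap 0 j.succ) i = c then 1 else 0)
      = ((α j : ℝ)) * (if y 0 = c then 1 else 0)
        + ∑ i ∈ univ \ {j}, ((α i : ℕ) : ℝ) * (if y i.succ = c then 1 else 0) := by
    rw [Finset.sum_eq_add_sum_sdiff_singleton_of_mem (Finset.mem_univ j)]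
    congr 1
    · have : Fin.tail (y ∘ Equiv.swap 0 j.succ) j = y 0 := by
        simp [Fin.tail, Equiv.swap_apply_right]
      rw [this]
    · apply Finset.sum_congr rfl
      intro i hi
      rw [Finset.mem_sdiff, Finset.mem_singleton] at hi
      have : Fin.tail (y ∘ Equiv.swap 0 j.succ) i = y i.succ := by
        simp only [Fin.tail, Function.comp_apply]
        rw [Equiv.swap_apply_of_ne_of_ne (Fin.succ_ne_zero i)
          (fun h => hi.2 (Fin.succ_injective _ h))]
      rw [this]
  have hcast : ((α j - 1 : ℕ) : ℝ) = (α j : ℝ) - 1 := by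
    have := Nat.cast_sub hj (R := ℝ)
    simpa using this
  rw [e2, e3, hcast]
  set A := (if y 0 = c then (1:ℝ) else 0) with hA
  set B := (if y j.succ = c then (1:ℝ) else 0) with hB
  set S := ∑ i ∈ univ \ {j}, ((α i : ℕ) : ℝ) * (if y i.succ = c then 1 else 0) with hS
  field_simp
  ring

/-- One splitting step. -/
lemma auxSPLIT {k : ℕ} (Φ : (C → ℝ) → ℝ)
    (hΦ : ∀ w₁ w₂ : C → ℝ, ∀ θ : ℝ, 0 ≤ θ → θ ≤ 1 →
      Φ (fun c => θ * w₁ c + (1 - θ) * w₂ c) ≤ θ * Φ w₁ + (1 - θ) * Φ w₂)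
    (α : Fin k → ℕ) (j : Fin k) (hj : 1 ≤ α j) :
    ∑ y ∈ Ik C (k+1), Φ (vece (Fin.cons 1 (Function.update α j (α j - 1))) y)
      ≤ ((Fintype.card C - k : ℕ) : ℝ) * ∑ x ∈ Ik C k, Φ (vece α x) := by
  have hm : (0:ℝ) < (α j : ℝ) := by exact_mod_cast hj
  set θ : ℝ := ((α j : ℝ) - 1) / (α j) with hθ
  have hθ0 : 0 ≤ θ := by
    apply div_nonneg _ hm.le
    have : (1:ℝ) ≤ (α j : ℝ) := by exact_mod_cast hj
    linarith
  have hθ1 : θ ≤ 1 := by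
    rw [hθ, div_le_one hm]
    linarith
  calc ∑ y ∈ Ik C (k+1), Φ (vece (Fin.cons 1 (Function.update α j (α j - 1))) y)
      ≤ ∑ y ∈ Ik C (k+1), (θ * Φ (vece α (Fin.tail y))
          + (1 - θ) * Φ (vece α (Fin.tail (y ∘ Equiv.swap 0 j.succ)))) := by
        apply Finset.sum_le_sum
        intro y _
        rw [auxSPLITID α j hj y]
        exact hΦ _ _ θ hθ0 hθ1
    _ = θ * ∑ y ∈ Ik C (k+1), Φ (vece α (Fin.tail y))
        + (1 - θ) * ∑ y ∈ Ik C (k+1), Φ (vece α (Fin.tail (y ∘ Equiv.swap 0 j.succ))) := by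
        rw [Finset.sum_add_distrib, Finset.mul_sum, Finset.mul_sum]
    _ = θ * ∑ y ∈ Ik C (k+1), Φ (vece α (Fin.tail y))
        + (1 - θ) * ∑ y ∈ Ik C (k+1), Φ (vece α (Fin.tail y)) := by
        congr 1
        congr 1
        exact auxPERM (Equiv.swap 0 j.succ) (fun y => Φ (vece α (Fin.tail y)))
    _ = ∑ y ∈ Ik C (k+1), Φ (vece α (Fin.tail y)) := by ring
    _ = ((Fintype.card C - k : ℕ) : ℝ) * ∑ x ∈ Ik C k, Φ (vece α x) :=
        auxTailSum (fun x => Φ (vece α x))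

lemma auxCHAIN (Φ : (C → ℝ) → ℝ)
    (hΦ : ∀ w₁ w₂ : C → ℝ, ∀ θ : ℝ, 0 ≤ θ → θ ≤ 1 →
      Φ (fun c => θ * w₁ c + (1 - θ) * w₂ c) ≤ θ * Φ w₁ + (1 - θ) * Φ w₂)
    (L : ℕ) (hLn : L ≤ Fintype.card C) :
    ∀ (d k : ℕ) (α : Fin k → ℕ), (∀ i, 1 ≤ α i) → (∑ i, α i) = L → k + d = L →
    ((Ik C k).card : ℝ) * (((Ik C L).card : ℝ)⁻¹ * ∑ x ∈ Ik C L, Φ (cnte x))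
      ≤ ∑ x ∈ Ik C k, Φ (vece α x) := by
  intro d
  induction d with
  | zero =>
    intro k α h1 hsum hk
    have hkL : k = L := by omega
    subst hkL
    have hone : ∀ i, α i = 1 := by
      intro i
      by_contra hne
      have h2 : 2 ≤ α i := by have := h1 i; omega
      have e := Finset.sum_eq_add_sum_sdiff_singleton_of_mem (Finset.mem_univ i) α
      have h4 : ∑ j ∈ univ \ {i}, 1 ≤ ∑ j ∈ univ \ {i}, α j :=
        Finset.sum_le_sum (fun j _ => h1 j)
      have h5 : (univ \ {i} : Finset (Fin k)).card = k - 1 := by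
        rw [Finset.card_sdiff_of_subset (by simp), Finset.card_univ, Fintype.card_fin,
          Finset.card_singleton]
      rw [Finset.sum_const, h5, smul_eq_mul, mul_one] at h4
      have hk0 : 0 < k := i.pos
      omega
    rw [show α = (fun _ => (1:ℕ)) from funext hone]
    simp only [vece_one]
    have hcardpos : (0:ℝ) < ((Ik C k).card : ℝ) := by
      exact_mod_cast Finset.card_pos.2 (auxInonempty hLn)
    rw [← mul_assoc, mul_inv_cancel₀ hcardpos.ne', one_mul]
  | succ d IH =>
    intro k α h1 hsum hk
    have hkn : k < Fintype.card C := by omega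
    obtain ⟨j, hj2⟩ : ∃ j, 2 ≤ α j := by
      by_contra hcon
      push_neg at hcon
      have hall : ∀ j, α j = 1 := fun j => by have := h1 j; have := hcon j; omega
      have : ∑ j, α j = k := by
        rw [Finset.sum_congr rfl (fun j _ => hall j)]
        simp
      omega
    set α' := (Fin.cons 1 (Function.update α j (α j - 1)) : Fin (k+1) → ℕ) with hα'
    have h1' : ∀ i, 1 ≤ α' i := by
      intro i
      refine Fin.cases ?_ ?_ i
      · simp only [hα', Fin.cons_zero]
        exact le_refl 1
      · intro i'
        simp only [hα', Fin.cons_succ]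
        by_cases hij : i' = j
        · rw [hij, Function.update_self]; omega
        · rw [Function.update_of_ne hij]; exact h1 i'
    have hsum' : ∑ i, α' i = L := by
      rw [hα', Fin.sum_cons, Finset.sum_update_of_mem (Finset.mem_univ j)]
      have e := Finset.sum_eq_add_sum_sdiff_singleton_of_mem (Finset.mem_univ j) α
      omega
    have hIH := IH (k+1) α' h1' hsum' (by omega)
    have hsplit := auxSPLIT Φ hΦ α j (by omega)
    rw [auxIcard] at hIH
    have hpos : (0:ℝ) < ((Fintype.card C - k : ℕ) : ℝ) := by
      have : 0 < Fintype.card C - k := by omega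
      exact_mod_cast this
    refine le_of_mul_le_mul_left ?_ hpos
    rw [← mul_assoc]
    exact le_trans hIH hsplit

lemma auxSumCons {t : ℕ} (F : (Fin (t+1) → C) → ℝ) :
    ∑ u : Fin (t+1) → C, F u = ∑ c : C, ∑ u : Fin t → C, F (Fin.cons c u) := by
  rw [Fintype.sum_equiv ((Fin.consEquiv (fun _ : Fin (t+1) => C)).symm) F
    (fun p => F (Fin.cons p.1 p.2))
    (fun v => by
      congr 1
      exact (Fin.cons_self_tail v).symm)]
  rw [Fintype.sum_prod_type]

lemma auxCnteCons {t : ℕ} (c : C) (u : Fin t → C) :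
    cnte (Fin.cons c u : Fin (t+1) → C) = fun z => (if c = z then (1:ℝ) else 0) + cnte u z := by
  funext z
  simp only [cnte]
  rw [Fin.sum_univ_succ]
  simp only [Fin.cons_zero, Fin.cons_succ]

lemma auxVecUpdate {k : ℕ} (α : Fin k → ℕ) (j : Fin k) (x : Fin k → C) :
    vece (Function.update α j (α j + 1)) x
      = fun z => vece α x z + (if x j = z then (1:ℝ) else 0) := by
  funext z
  simp only [vece]
  rw [Finset.sum_eq_add_sum_sdiff_singleton_of_mem (Finset.mem_univ j)
    (fun i => ((Function.update α j (α j + 1) i : ℕ) : ℝ) * (if x i = z then 1 else 0))]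
  rw [Finset.sum_eq_add_sum_sdiff_singleton_of_mem (Finset.mem_univ j)
    (fun i => ((α i : ℕ) : ℝ) * (if x i = z then 1 else 0))]
  have e1 : ∑ i ∈ univ \ {j}, ((Function.update α j (α j + 1) i : ℕ) : ℝ) *
      (if x i = z then 1 else 0)
      = ∑ i ∈ univ \ {j}, ((α i : ℕ) : ℝ) * (if x i = z then 1 else 0) := by
    apply Finset.sum_congr rfl
    intro i hi
    rw [Finset.mem_sdiff, Finset.mem_singleton] at hi
    rw [Function.update_of_ne hi.2]
  rw [e1, Function.update_self]
  push_cast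
  ring

lemma auxVecCons {k : ℕ} (α : Fin k → ℕ) (c : C) (x : Fin k → C) :
    vece (Fin.cons 1 α) (Fin.cons c x : Fin (k+1) → C)
      = fun z => (if c = z then (1:ℝ) else 0) + vece α x z := by
  funext z
  simp [vece, Fin.sum_univ_succ]

lemma auxUREC (Φ : (C → ℝ) → ℝ)
    (hΦ : ∀ w₁ w₂ : C → ℝ, ∀ θ : ℝ, 0 ≤ θ → θ ≤ 1 →
      Φ (fun c => θ * w₁ c + (1 - θ) * w₂ c) ≤ θ * Φ w₁ + (1 - θ) * Φ w₂)
    (L : ℕ) (hLn : L ≤ Fintype.card C) :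
    ∀ (t k : ℕ) (α : Fin k → ℕ), (∀ i, 1 ≤ α i) → (∑ i, α i) + t = L →
    ((Ik C k).card : ℝ) * ((Fintype.card C : ℝ) ^ t) *
        (((Ik C L).card : ℝ)⁻¹ * ∑ x ∈ Ik C L, Φ (cnte x))
      ≤ ∑ x ∈ Ik C k, ∑ u : Fin t → C, Φ (fun c => vece α x c + cnte u c) := by
  intro t
  induction t with
  | zero =>
    intro k α h1 hsum
    haveI : Unique (Fin 0 → C) := ⟨⟨fun i => i.elim0⟩, fun v => funext fun i => i.elim0⟩
    have e0 : ∀ x : Fin k → C, ∑ u : Fin 0 → C, Φ (fun c => vece α x c + cnte u c)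
        = Φ (vece α x) := by
      intro x
      rw [Fintype.sum_unique]
      congr 1
      funext c
      simp [cnte]
    rw [Finset.sum_congr rfl (fun x _ => e0 x), pow_zero, mul_one]
    have hkL : k ≤ L := by
      have : k ≤ ∑ i, α i := by
        calc k = ∑ _i : Fin k, 1 := by simp
          _ ≤ ∑ i, α i := Finset.sum_le_sum fun i _ => h1 i
      omega
    exact auxCHAIN Φ hΦ L hLn (L - k) k α h1 (by omega) (by omega)
  | succ t IH =>
    intro k α h1 hsum
    have hkS : k ≤ ∑ i, α i := by
      calc k = ∑ _i : Fin k, 1 := by simp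
        _ ≤ ∑ i, α i := Finset.sum_le_sum fun i _ => h1 i
    have hkn : k < Fintype.card C := by omega
    -- the decomposition identity for the inner sum
    have inner : ∀ x ∈ Ik C k,
        ∑ u : Fin (t+1) → C, Φ (fun c => vece α x c + cnte u c)
          = (∑ j : Fin k, ∑ u : Fin t → C,
              Φ (fun c => vece (Function.update α j (α j + 1)) x c + cnte u c))
            + ∑ cc ∈ univ \ Finset.image x univ, ∑ u : Fin t → C,
              Φ (fun c => vece (Fin.cons 1 α) (Fin.cons cc x : Fin (k+1) → C) c + cnte u c) := by
      intro x hx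
      rw [auxSumCons (fun u => Φ (fun c => vece α x c + cnte u c))]
      have e1 : ∀ cc : C, ∑ u : Fin t → C,
          Φ (fun c => vece α x c + cnte (Fin.cons cc u : Fin (t+1) → C) c)
          = ∑ u : Fin t → C,
            Φ (fun c => (vece α x c + (if cc = c then (1:ℝ) else 0)) + cnte u c) := by
        intro cc
        refine Finset.sum_congr rfl fun u _ => ?_
        congr 1
        funext c
        rw [auxCnteCons]
        ring
      rw [Finset.sum_congr rfl (fun cc _ => e1 cc)]
      rw [← Finset.sum_sdiff (Finset.subset_univ (Finset.image x univ))]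
      rw [add_comm]
      congr 1
      · -- image part
        rw [Finset.sum_image (fun i _ i' _ h => mem_Ik.1 hx h)]
        refine Finset.sum_congr rfl fun j _ => ?_
        refine Finset.sum_congr rfl fun u _ => ?_
        congr 1
        funext c
        rw [auxVecUpdate]
      · -- sdiff part
        refine Finset.sum_congr rfl fun cc _ => ?_
        refine Finset.sum_congr rfl fun u _ => ?_
        congr 1
        funext c
        rw [auxVecCons]
        ring
    rw [Finset.sum_congr rfl inner, Finset.sum_add_distrib]
    -- first summand: swap sums and apply IH for each j
    have first : ∀ j : Fin k,
        ((Ik C k).card : ℝ) * ((Fintype.card C : ℝ) ^ t) *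
          (((Ik C L).card : ℝ)⁻¹ * ∑ x ∈ Ik C L, Φ (cnte x))
        ≤ ∑ x ∈ Ik C k, ∑ u : Fin t → C,
            Φ (fun c => vece (Function.update α j (α j + 1)) x c + cnte u c) := by
      intro j
      apply IH k (Function.update α j (α j + 1))
      · intro i
        by_cases hij : i = j
        · rw [hij, Function.update_self]; omega
        · rw [Function.update_of_ne hij]; exact h1 i
      · rw [Finset.sum_update_of_mem (Finset.mem_univ j)]
        have e := Finset.sum_eq_add_sum_sdiff_singleton_of_mem (Finset.mem_univ j) α
        omega
    have second :
        ((Ik C (k+1)).card : ℝ) * ((Fintype.card C : ℝ) ^ t) *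
          (((Ik C L).card : ℝ)⁻¹ * ∑ x ∈ Ik C L, Φ (cnte x))
        ≤ ∑ x ∈ Ik C k, ∑ cc ∈ univ \ Finset.image x univ, ∑ u : Fin t → C,
            Φ (fun c => vece (Fin.cons 1 α) (Fin.cons cc x : Fin (k+1) → C) c + cnte u c) := by
      rw [← auxBIJ (fun y => ∑ u : Fin t → C, Φ (fun c => vece (Fin.cons 1 α) y c + cnte u c))]
      apply IH (k+1) (Fin.cons 1 α)
      · intro i
        refine Fin.cases ?_ ?_ i
        · rw [Fin.cons_zero]
        · intro i'
          rw [Fin.cons_succ]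
          exact h1 i'
      · rw [Fin.sum_cons]
        omega
    -- combine
    set W : ℝ := ((Ik C L).card : ℝ)⁻¹ * ∑ x ∈ Ik C L, Φ (cnte x) with hW
    have swap1 : ∑ x ∈ Ik C k, ∑ j : Fin k, ∑ u : Fin t → C,
        Φ (fun c => vece (Function.update α j (α j + 1)) x c + cnte u c)
        = ∑ j : Fin k, ∑ x ∈ Ik C k, ∑ u : Fin t → C,
            Φ (fun c => vece (Function.update α j (α j + 1)) x c + cnte u c) :=
      Finset.sum_comm
    rw [swap1]
    have hsum1 : ∑ j : Fin k, (((Ik C k).card : ℝ) * ((Fintype.card C : ℝ) ^ t) * W)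
        ≤ ∑ j : Fin k, ∑ x ∈ Ik C k, ∑ u : Fin t → C,
            Φ (fun c => vece (Function.update α j (α j + 1)) x c + cnte u c) :=
      Finset.sum_le_sum fun j _ => first j
    rw [Finset.sum_const, Finset.card_univ, Fintype.card_fin, nsmul_eq_mul] at hsum1
    have hfinal := add_le_add hsum1 second
    refine le_trans (le_of_eq ?_) hfinal
    rw [auxIcard]
    have hcast : ((Fintype.card C - k : ℕ) : ℝ) = (Fintype.card C : ℝ) - (k : ℝ) := by
      have hk' : k ≤ Fintype.card C := hkn.le
      push_cast [Nat.cast_sub hk']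
      ring
    rw [hcast, pow_succ]
    ring

/-- Without-replacement average is dominated by the i.i.d. average for convex `Φ`. -/
lemma auxWO [Nonempty C] (Φ : (C → ℝ) → ℝ)
    (hΦ : ∀ w₁ w₂ : C → ℝ, ∀ θ : ℝ, 0 ≤ θ → θ ≤ 1 →
      Φ (fun c => θ * w₁ c + (1 - θ) * w₂ c) ≤ θ * Φ w₁ + (1 - θ) * Φ w₂)
    (L : ℕ) (hLn : L ≤ Fintype.card C) :
    ((Ik C L).card : ℝ)⁻¹ * ∑ x ∈ Ik C L, Φ (cnte x)
      ≤ ((Fintype.card C : ℝ) ^ L)⁻¹ * ∑ u : Fin L → C, Φ (cnte u) := by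
  haveI : Unique (Fin 0 → C) := ⟨⟨fun i => i.elim0⟩, fun v => funext fun i => i.elim0⟩
  have h0 : (Ik C 0) = (univ : Finset (Fin 0 → C)) := by
    apply Finset.eq_univ_iff_forall.2
    intro x
    exact mem_Ik.2 (fun a b _ => Subsingleton.elim a b)
  have hU := auxUREC Φ hΦ L hLn L 0 (fun i => i.elim0) (fun i => i.elim0) (by simp)
  have hcard0 : ((Ik C 0).card : ℝ) = 1 := by
    rw [h0]
    simp [Finset.card_univ]
  rw [hcard0, one_mul] at hU
  have hRHS : ∑ x ∈ Ik C 0, ∑ u : Fin L → C,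
      Φ (fun c => vece (fun i => i.elim0) x c + cnte u c) = ∑ u : Fin L → C, Φ (cnte u) := by
    rw [h0, Fintype.sum_unique]
    refine Finset.sum_congr rfl fun u _ => ?_
    congr 1
    funext c
    simp [vece]
  rw [hRHS] at hU
  have hnpos : (0:ℝ) < (Fintype.card C : ℝ) := by
    exact_mod_cast Fintype.card_pos
  have hpow : (0:ℝ) < (Fintype.card C : ℝ) ^ L := by positivity
  rw [show ((Fintype.card C : ℝ) ^ L)⁻¹ * ∑ u : Fin L → C, Φ (cnte u)
    = ((Fintype.card C : ℝ) ^ L)⁻¹ * (((Fintype.card C : ℝ) ^ L) *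
        (((Ik C L).card : ℝ)⁻¹ * ∑ x ∈ Ik C L, Φ (cnte x)))
      + ((Fintype.card C : ℝ) ^ L)⁻¹ * ((∑ u : Fin L → C, Φ (cnte u))
        - ((Fintype.card C : ℝ) ^ L) * (((Ik C L).card : ℝ)⁻¹ * ∑ x ∈ Ik C L, Φ (cnte x)))
    from by ring]
  have h1 : ((Fintype.card C : ℝ) ^ L)⁻¹ * (((Fintype.card C : ℝ) ^ L) *
      (((Ik C L).card : ℝ)⁻¹ * ∑ x ∈ Ik C L, Φ (cnte x)))
      = ((Ik C L).card : ℝ)⁻¹ * ∑ x ∈ Ik C L, Φ (cnte x) := by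
    field_simp
  rw [h1]
  have h2 : 0 ≤ ((Fintype.card C : ℝ) ^ L)⁻¹ * ((∑ u : Fin L → C, Φ (cnte u))
      - ((Fintype.card C : ℝ) ^ L) * (((Ik C L).card : ℝ)⁻¹ * ∑ x ∈ Ik C L, Φ (cnte x))) := by
    apply mul_nonneg (inv_nonneg.2 hpow.le)
    linarith [hU]
  linarith

/-- counting with constant fibers -/
lemma auxConstFiber {β : Type*} (B : Finset β) (pr : β → Finset C) (S0 : Finset (Finset C))
    (hmem : ∀ b ∈ B, pr b ∈ S0)
    (hconst : ∀ S ∈ S0, ∀ S' ∈ S0,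
      (B.filter (fun b => pr b = S)).card = (B.filter (fun b => pr b = S')).card)
    (F : Finset C → ℝ) :
    (S0.card : ℝ) * ∑ b ∈ B, F (pr b) = (B.card : ℝ) * ∑ S ∈ S0, F S := by
  rcases S0.eq_empty_or_nonempty with hS0 | ⟨S₀, hS₀⟩
  · have hB : B = ∅ := by
      rw [Finset.eq_empty_iff_forall_notMem]
      intro b hb
      exact absurd (hmem b hb) (by simp [hS0])
    simp [hS0, hB]
  · set N : ℕ := (B.filter (fun b => pr b = S₀)).card with hN
    have h1 : ∑ b ∈ B, F (pr b) = ∑ S ∈ S0, (N : ℝ) * F S := by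
      rw [← Finset.sum_fiberwise_of_maps_to hmem (fun b => F (pr b))]
      refine Finset.sum_congr rfl fun S hS => ?_
      have e1 : ∀ b ∈ B.filter (fun b => pr b = S), F (pr b) = F S := by
        intro b hb
        rw [(Finset.mem_filter.1 hb).2]
      rw [Finset.sum_congr rfl e1, Finset.sum_const, nsmul_eq_mul]
      congr 1
      exact_mod_cast (hconst S hS S₀ hS₀)
    have h2 : (B.card : ℝ) = (S0.card : ℝ) * (N : ℝ) := by
      have h2a : B.card = ∑ S ∈ S0, (B.filter (fun b => pr b = S)).card :=
        Finset.card_eq_sum_card_fiberwise hmem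
      have h2b : ∑ S ∈ S0, (B.filter (fun b => pr b = S)).card = ∑ _S ∈ S0, N :=
        Finset.sum_congr rfl (fun S hS => hconst S hS S₀ hS₀)
      rw [h2a, h2b, Finset.sum_const, smul_eq_mul]
      push_cast
      ring
    rw [h1, h2, Finset.mul_sum, Finset.mul_sum]
    apply Finset.sum_congr rfl
    intro S _
    ring

/-- a permutation moving `S` onto `S'` -/
lemma auxPermExists (S S' : Finset C) (h : S.card = S'.card) :
    ∃ σ : Equiv.Perm C, ∀ x, σ x ∈ S' ↔ x ∈ S := by
  have hc1 : Fintype.card {x // x ∈ S} = Fintype.card {x // x ∈ S'} := by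
    rw [Fintype.card_coe, Fintype.card_coe, h]
  have hc2 : Fintype.card {x // ¬ x ∈ S} = Fintype.card {x // ¬ x ∈ S'} := by
    rw [Fintype.card_subtype_compl, Fintype.card_subtype_compl, hc1]
  obtain ⟨e1⟩ := Fintype.card_eq.1 hc1
  obtain ⟨e2⟩ := Fintype.card_eq.1 hc2
  refine ⟨(Equiv.sumCompl (· ∈ S)).symm.trans ((e1.sumCongr e2).trans
    (Equiv.sumCompl (· ∈ S'))), ?_⟩
  intro x
  by_cases hx : x ∈ S
  · simp only [Equiv.trans_apply, Equiv.sumCompl_symm_apply_of_pos hx, Equiv.sumCongr_apply,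
      Sum.map_inl, Equiv.sumCompl_apply_inl]
    exact ⟨fun _ => hx, fun _ => (e1 ⟨x, hx⟩).2⟩
  · simp only [Equiv.trans_apply, Equiv.sumCompl_symm_apply_of_neg hx, Equiv.sumCongr_apply,
      Sum.map_inr, Equiv.sumCompl_apply_inr]
    exact ⟨fun hmem => absurd hmem (e2 ⟨x, hx⟩).2, fun hmem => absurd hmem hx⟩

/-- indicator of the image of an injective tuple is its counting vector -/
lemma auxIndCnte {L : ℕ} (x : Fin L → C) (hx : Function.Injective x) :
    (fun c => if c ∈ Finset.image x univ then (1:ℝ) else 0) = cnte x := by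
  funext c
  by_cases hc : c ∈ Finset.image x univ
  · obtain ⟨i, -, hi⟩ := Finset.mem_image.1 hc
    have : (univ.filter (fun j => x j = c)) = {i} := by
      ext j
      simp only [Finset.mem_filter, Finset.mem_univ, true_and, Finset.mem_singleton]
      constructor
      · intro hj
        exact hx (hj.trans hi.symm)
      · rintro rfl
        exact hi
    simp only [hc, if_true, cnte]
    rw [Finset.sum_boole, this, Finset.card_singleton]
    norm_num
  · simp only [hc, if_false, cnte]
    symm
    apply Finset.sum_eq_zero
    intro i _
    rw [if_neg]
    intro hxi
    exact hc (Finset.mem_image.2 ⟨i, Finset.mem_univ i, hxi⟩)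

/-- summing a composed function over tuples -/
lemma auxCnteSum {L : ℕ} (v : Fin L → C) (g : C → ℝ) :
    ∑ x : C, cnte v x * g x = ∑ i, g (v i) := by
  simp only [cnte, Finset.sum_mul]
  rw [Finset.sum_comm]
  refine Finset.sum_congr rfl fun i _ => ?_
  rw [Finset.sum_congr rfl (fun x _ => (ite_mul (v i = x) (1:ℝ) 0 (g x)).trans
    (by rw [one_mul, zero_mul]))]
  rw [Finset.sum_ite_eq univ (v i) g, if_pos (Finset.mem_univ _)]

/-- summing evaluation at a coordinate over all tuples -/
lemma auxEvalSum {L : ℕ} [Nonempty C] (i : Fin L) (h : C → ℝ) :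
    ∑ v : Fin L → C, h (v i) = (Fintype.card C : ℝ) ^ (L - 1) * ∑ x : C, h x := by
  have hcard : Fintype.card ({j : Fin L // j ≠ i} → C) = Fintype.card C ^ (L - 1) := by
    rw [Fintype.card_fun]
    congr 1
    rw [Fintype.card_subtype_compl, Fintype.card_fin, Fintype.card_subtype_eq]
  rw [show (∑ v : Fin L → C, h (v i))
      = ∑ p : C × ({j : Fin L // j ≠ i} → C), h p.1 from
    Fintype.sum_equiv (Equiv.funSplitAt i C) _ _ (fun v => rfl)]
  rw [Fintype.sum_prod_type]
  have e2 : ∀ a : C, ∑ _w : {j : Fin L // j ≠ i} → C, h a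
      = ((Fintype.card C : ℝ) ^ (L-1)) * h a := by
    intro a
    rw [Finset.sum_const, nsmul_eq_mul, Finset.card_univ, hcard]
    push_cast
    ring
  rw [Finset.sum_congr rfl (fun a _ => e2 a), ← Finset.mul_sum]

lemma auxPermFiber {M : ℕ} (σ : Equiv.Perm C) (g : C → Fin M) (m' : Fin M) :
    (univ.filter (fun x => g (σ x) = m')).card = (univ.filter (fun x => g x = m')).card := by
  apply Finset.card_bij' (fun x _ => σ x) (fun y _ => σ.symm y)
  · intro x hx
    simp only [Finset.mem_filter, Finset.mem_univ, true_and] at hx ⊢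
    exact hx
  · intro y hy
    simp only [Finset.mem_filter, Finset.mem_univ, true_and] at hy ⊢
    simpa using hy
  · intro x _
    simp
  · intro y _
    simp

lemma auxBalConst (L : ℕ) {M : ℕ} (m : Fin M) (S S' : Finset C) (hc : S.card = S'.card) :
    (((univ.filter (fun g : C → Fin M =>
        ∀ m', (univ.filter (fun x => g x = m')).card = L)).filter
      (fun g => univ.filter (fun x => g x = m) = S)).card)
    = (((univ.filter (fun g : C → Fin M =>
        ∀ m', (univ.filter (fun x => g x = m')).card = L)).filter
      (fun g => univ.filter (fun x => g x = m) = S')).card) := by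
  obtain ⟨σ, hσ⟩ := auxPermExists S' S hc.symm
  -- σ x ∈ S ↔ x ∈ S'
  have hσ' : ∀ x, σ.symm x ∈ S' ↔ x ∈ S := by
    intro x
    constructor
    · intro h
      have := (hσ (σ.symm x)).2 h
      simpa using this
    · intro h
      apply (hσ (σ.symm x)).1
      simpa using h
  apply Finset.card_bij' (fun g _ => g ∘ σ) (fun g _ => g ∘ σ.symm)
  · intro g hg
    simp only [Finset.mem_filter, Finset.mem_univ, true_and] at hg ⊢
    obtain ⟨hbal, hfib⟩ := hg
    constructor
    · intro m'
      rw [show (univ.filter (fun x => (g ∘ σ) x = m')) =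
        (univ.filter (fun x => g (σ x) = m')) from rfl, auxPermFiber σ g m']
      exact hbal m'
    · ext x
      simp only [Finset.mem_filter, Finset.mem_univ, true_and, Function.comp_apply]
      rw [← hσ x, ← hfib]
      simp
  · intro g hg
    simp only [Finset.mem_filter, Finset.mem_univ, true_and] at hg ⊢
    obtain ⟨hbal, hfib⟩ := hg
    constructor
    · intro m'
      rw [show (univ.filter (fun x => (g ∘ σ.symm) x = m')) =
        (univ.filter (fun x => g (σ.symm x) = m')) from rfl, auxPermFiber σ.symm g m']
      exact hbal m'
    · ext x
      simp only [Finset.mem_filter, Finset.mem_univ, true_and, Function.comp_apply]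
      rw [← hσ' x, ← hfib]
      simp
  · intro g _
    funext x
    simp
  · intro g _
    funext x
    simp

lemma auxInjConst (L : ℕ) (S S' : Finset C) (hc : S.card = S'.card) :
    (((Ik C L).filter (fun x => Finset.image x univ = S)).card)
    = (((Ik C L).filter (fun x => Finset.image x univ = S')).card) := by
  obtain ⟨σ, hσ⟩ := auxPermExists S S' hc
  -- σ x ∈ S' ↔ x ∈ S
  have hσ' : ∀ x, σ.symm x ∈ S ↔ x ∈ S' := by
    intro x
    have := hσ (σ.symm x)
    simp only [Equiv.apply_symm_apply] at this
    exact this.symm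
  apply Finset.card_bij' (fun x _ => σ ∘ x) (fun x _ => σ.symm ∘ x)
  · intro x hx
    rw [Finset.mem_filter] at hx ⊢
    obtain ⟨hinj, hfib⟩ := hx
    refine ⟨mem_Ik.2 (σ.injective.comp (mem_Ik.1 hinj)), ?_⟩
    ext c
    simp only [Finset.mem_image, Finset.mem_univ, true_and, Function.comp_apply]
    constructor
    · rintro ⟨i, rfl⟩
      exact (hσ (x i)).2 (by rw [← hfib]; exact Finset.mem_image.2 ⟨i, Finset.mem_univ i, rfl⟩)
    · intro hcS
      have h2 : σ.symm c ∈ S := (hσ' c).2 hcS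
      rw [← hfib] at h2
      obtain ⟨i, -, hi⟩ := Finset.mem_image.1 h2
      exact ⟨i, by rw [hi]; simp⟩
  · intro x hx
    rw [Finset.mem_filter] at hx ⊢
    obtain ⟨hinj, hfib⟩ := hx
    refine ⟨mem_Ik.2 (σ.symm.injective.comp (mem_Ik.1 hinj)), ?_⟩
    ext c
    simp only [Finset.mem_image, Finset.mem_univ, true_and, Function.comp_apply]
    constructor
    · rintro ⟨i, rfl⟩
      exact (hσ' (x i)).2 (by rw [← hfib]; exact Finset.mem_image.2 ⟨i, Finset.mem_univ i, rfl⟩)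
    · intro hcS
      have h2 : σ c ∈ S' := (hσ c).2 hcS
      rw [← hfib] at h2
      obtain ⟨i, -, hi⟩ := Finset.mem_image.1 h2
      exact ⟨i, by rw [hi]; simp⟩
  · intro x _
    funext i
    simp
  · intro x _
    funext i
    simp

lemma auxBalExists (L M : ℕ) (hcard : Fintype.card C = L * M) :
    ∃ g : C → Fin M, ∀ m, (univ.filter (fun x => g x = m)).card = L := by
  have hce : Fintype.card C = Fintype.card (Fin L × Fin M) := by
    rw [hcard, Fintype.card_prod, Fintype.card_fin, Fintype.card_fin]
  obtain ⟨e⟩ := Fintype.card_eq.1 hce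
  refine ⟨fun x => (e x).2, fun m => ?_⟩
  have : (univ.filter (fun x => (e x).2 = m)).card = (univ : Finset (Fin L)).card := by
    apply Finset.card_bij' (fun x _ => (e x).1) (fun a _ => e.symm (a, m))
    · intro x _
      exact Finset.mem_univ _
    · intro a _
      simp only [Finset.mem_filter, Finset.mem_univ, true_and]
      simp
    · intro x hx
      simp only [Finset.mem_filter, Finset.mem_univ, true_and] at hx
      have h3 : ((e x).1, m) = e x := by
        rw [← hx]
      rw [h3]
      simp
    · intro a _
      simp
  rw [this, Finset.card_univ, Fintype.card_fin]

lemma auxMain [Nonempty C] (L M : ℕ) (hL : 0 < L) (hM : 0 < M)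
    (hcard : Fintype.card C = L * M) (m : Fin M) (φ : (C → ℝ) → ℝ)
    (hconv : ∀ w₁ w₂ : C → ℝ, ∀ θ : ℝ, 0 ≤ θ → θ ≤ 1 →
      φ (fun c => θ * w₁ c + (1 - θ) * w₂ c) ≤ θ * φ w₁ + (1 - θ) * φ w₂)
    (hlip : ∀ (v : Fin L → C) (i : Fin L) (a : C),
      φ (cnte v) - φ (cnte (Function.update v i a)) ≤ (L:ℝ)⁻¹)
    (r : ℝ) (hr : 0 < r) :
    (((univ.filter (fun g : C → Fin M =>
        ∀ m', (univ.filter (fun x => g x = m')).card = L)).filter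
      (fun g => r + ((Fintype.card C : ℝ)^L)⁻¹ * (∑ v : Fin L → C, φ (cnte v))
        ≤ φ (fun c => if c ∈ univ.filter (fun x => g x = m) then (1:ℝ) else 0))).card : ℝ)
    ≤ ((univ.filter (fun g : C → Fin M =>
        ∀ m', (univ.filter (fun x => g x = m')).card = L)).card : ℝ)
      * Real.exp (-2 * L * r^2) := by
  have hLn : L ≤ Fintype.card C := by
    rw [hcard]
    exact Nat.le_mul_of_pos_right L hM
  set n : ℝ := (Fintype.card C : ℝ) with hn
  have hnpos : (0:ℝ) < n := by
    rw [hn]; exact_mod_cast Fintype.card_pos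
  set Bal : Finset (C → Fin M) := univ.filter (fun g : C → Fin M =>
    ∀ m', (univ.filter (fun x => g x = m')).card = L) with hBal
  set Ef : ℝ := ((Fintype.card C : ℝ)^L)⁻¹ * (∑ v : Fin L → C, φ (cnte v)) with hEf
  set a : ℝ := r + Ef with ha
  set s : ℝ := 4 * L * r with hs
  have hspos : 0 < s := by
    rw [hs]
    have : (0:ℝ) < (L:ℝ) := by exact_mod_cast hL
    positivity
  set S0 : Finset (Finset C) := Finset.powersetCard L univ with hS0
  set F : Finset C → ℝ :=
    fun S => if a ≤ φ (fun c => if c ∈ S then (1:ℝ) else 0) then 1 else 0 with hF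
  set prg : (C → Fin M) → Finset C := fun g => univ.filter (fun x => g x = m) with hprg
  set prx : (Fin L → C) → Finset C := fun x => Finset.image x univ with hprx
  have hmemB : ∀ g ∈ Bal, prg g ∈ S0 := by
    intro g hg
    rw [hS0, Finset.mem_powersetCard]
    exact ⟨Finset.subset_univ _, (Finset.mem_filter.1 hg).2 m⟩
  have hmemI : ∀ x ∈ Ik C L, prx x ∈ S0 := by
    intro x hx
    rw [hS0, Finset.mem_powersetCard]
    refine ⟨Finset.subset_univ _, ?_⟩
    rw [hprx]
    rw [Finset.card_image_of_injective _ (mem_Ik.1 hx), Finset.card_univ, Fintype.card_fin]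
  have hcards : ∀ S ∈ S0, S.card = L := fun S hS => (Finset.mem_powersetCard.1 hS).2
  have hconstB : ∀ S ∈ S0, ∀ S' ∈ S0,
      (Bal.filter (fun b => prg b = S)).card = (Bal.filter (fun b => prg b = S')).card := by
    intro S hS S' hS'
    exact auxBalConst L m S S' ((hcards S hS).trans (hcards S' hS').symm)
  have hconstI : ∀ S ∈ S0, ∀ S' ∈ S0,
      ((Ik C L).filter (fun b => prx b = S)).card
        = ((Ik C L).filter (fun b => prx b = S')).card := by
    intro S hS S' hS'
    exact auxInjConst L S S' ((hcards S hS).trans (hcards S' hS').symm)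
  have A2 := auxConstFiber Bal prg S0 hmemB hconstB F
  have A3 := auxConstFiber (Ik C L) prx S0 hmemI hconstI F
  have hS0pos : (0:ℝ) < (S0.card : ℝ) := by
    have : S0.Nonempty := by
      obtain ⟨t, hsub, hc⟩ := Finset.exists_subset_card_eq (s := (univ : Finset C)) (by simpa using hLn)
      exact ⟨t, Finset.mem_powersetCard.2 ⟨hsub, hc⟩⟩
    exact_mod_cast Finset.card_pos.2 this
  have hILpos : (0:ℝ) < ((Ik C L).card : ℝ) := by
    exact_mod_cast Finset.card_pos.2 (auxInonempty hLn)
  -- count as a sum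
  have hcount : ((Bal.filter (fun g => a ≤ φ (fun c =>
      if c ∈ univ.filter (fun x => g x = m) then (1:ℝ) else 0))).card : ℝ)
      = ∑ g ∈ Bal, F (prg g) := by
    rw [hF, Finset.sum_boole]
  -- transfer to injective tuples
  have hkey : ((Ik C L).card : ℝ) * ∑ g ∈ Bal, F (prg g)
      = (Bal.card : ℝ) * ∑ x ∈ Ik C L, F (prx x) := by
    have h4 : (S0.card : ℝ) * (((Ik C L).card : ℝ) * ∑ g ∈ Bal, F (prg g))
        = (S0.card : ℝ) * ((Bal.card : ℝ) * ∑ x ∈ Ik C L, F (prx x)) := by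
      linear_combination ((Ik C L).card : ℝ) * A2 - (Bal.card : ℝ) * A3
    exact mul_left_cancel₀ hS0pos.ne' h4
  -- pointwise Chernoff on tuples
  set Φ : (C → ℝ) → ℝ := fun w => Real.exp (s * φ w) with hΦdef
  have hΦ : ∀ w₁ w₂ : C → ℝ, ∀ θ : ℝ, 0 ≤ θ → θ ≤ 1 →
      Φ (fun c => θ * w₁ c + (1 - θ) * w₂ c) ≤ θ * Φ w₁ + (1 - θ) * Φ w₂ := by
    intro w1 w2 θ h0 h1
    have step1 : Real.exp (s * φ (fun c => θ * w1 c + (1 - θ) * w2 c))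
        ≤ Real.exp (s * (θ * φ w1 + (1 - θ) * φ w2)) := by
      apply Real.exp_le_exp.2
      exact mul_le_mul_of_nonneg_left (hconv w1 w2 θ h0 h1) hspos.le
    have step2 : Real.exp (s * (θ * φ w1 + (1 - θ) * φ w2))
        ≤ θ * Real.exp (s * φ w1) + (1 - θ) * Real.exp (s * φ w2) := by
      have hb' : (0:ℝ) ≤ 1 - θ := by linarith
      have hab' : θ + (1 - θ) = 1 := by ring
      have hcx := convexOn_exp.2 (Set.mem_univ (s * φ w1)) (Set.mem_univ (s * φ w2))
        h0 hb' hab' 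
      simp only [smul_eq_mul] at hcx
      calc Real.exp (s * (θ * φ w1 + (1 - θ) * φ w2))
          = Real.exp (θ * (s * φ w1) + (1 - θ) * (s * φ w2)) := by congr 1; ring
        _ ≤ θ * Real.exp (s * φ w1) + (1 - θ) * Real.exp (s * φ w2) := hcx
    exact le_trans step1 step2
  have hpoint : ∀ x ∈ Ik C L, F (prx x) ≤ Real.exp (-(s * a)) * Φ (cnte x) := by
    intro x hx
    rw [hF, hprx]
    simp only
    rw [auxIndCnte x (mem_Ik.1 hx)]
    rw [hΦdef]
    simp only
    rw [← Real.exp_add]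
    by_cases hcond : a ≤ φ (cnte x)
    · rw [if_pos hcond]
      apply Real.one_le_exp
      nlinarith
    · rw [if_neg hcond]
      exact (Real.exp_pos _).le
  -- assemble
  have hsum1 : ∑ x ∈ Ik C L, F (prx x)
      ≤ Real.exp (-(s * a)) * ∑ x ∈ Ik C L, Φ (cnte x) := by
    rw [Finset.mul_sum]
    exact Finset.sum_le_sum hpoint
  have hWO := auxWO Φ hΦ L hLn
  have htens := auxTensor (L:ℝ)⁻¹ s (by positivity) L (fun v => φ (cnte v)) hlip
  -- Σ_{x ∈ I_L} Φ(cnte x) ≤ I_L * exp(s*Ef + s²/(8L))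
  have hIL : ∑ x ∈ Ik C L, Φ (cnte x)
      ≤ ((Ik C L).card : ℝ) * Real.exp (s * Ef + s^2 * L * ((L:ℝ)⁻¹)^2 / 8) := by
    have h5 : ∑ x ∈ Ik C L, Φ (cnte x)
        = ((Ik C L).card : ℝ) * (((Ik C L).card : ℝ)⁻¹ * ∑ x ∈ Ik C L, Φ (cnte x)) := by
      field_simp
    rw [h5]
    apply mul_le_mul_of_nonneg_left _ hILpos.le
    calc ((Ik C L).card : ℝ)⁻¹ * ∑ x ∈ Ik C L, Φ (cnte x)
        ≤ ((Fintype.card C : ℝ) ^ L)⁻¹ * ∑ u : Fin L → C, Φ (cnte u) := hWO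
      _ ≤ ((Fintype.card C : ℝ) ^ L)⁻¹ * ((Fintype.card C : ℝ) ^ L *
            Real.exp (s * Ef + s^2 * L * ((L:ℝ)⁻¹)^2 / 8)) := by
          apply mul_le_mul_of_nonneg_left _ (by positivity)
          exact htens
      _ = Real.exp (s * Ef + s^2 * L * ((L:ℝ)⁻¹)^2 / 8) := by
          field_simp
  -- final chain
  have hfinal : ((Ik C L).card : ℝ) * ∑ g ∈ Bal, F (prg g)
      ≤ ((Ik C L).card : ℝ) * ((Bal.card : ℝ) * Real.exp (-2 * L * r^2)) := by
    rw [hkey]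
    have hexp : Real.exp (-(s * a)) * Real.exp (s * Ef + s^2 * L * ((L:ℝ)⁻¹)^2 / 8)
        = Real.exp (-2 * L * r^2) := by
      rw [← Real.exp_add]
      congr 1
      have hLne : (L:ℝ) ≠ 0 := by
        have : (0:ℝ) < (L:ℝ) := by exact_mod_cast hL
        exact this.ne'
      rw [ha, hs]
      field_simp
      ring
    calc (Bal.card : ℝ) * ∑ x ∈ Ik C L, F (prx x)
        ≤ (Bal.card : ℝ) * (Real.exp (-(s * a)) * ∑ x ∈ Ik C L, Φ (cnte x)) := by
          apply mul_le_mul_of_nonneg_left hsum1 (Nat.cast_nonneg _)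
      _ ≤ (Bal.card : ℝ) * (Real.exp (-(s * a)) * (((Ik C L).card : ℝ) *
            Real.exp (s * Ef + s^2 * L * ((L:ℝ)⁻¹)^2 / 8))) := by
          apply mul_le_mul_of_nonneg_left _ (Nat.cast_nonneg _)
          exact mul_le_mul_of_nonneg_left hIL (Real.exp_pos _).le
      _ = ((Ik C L).card : ℝ) * ((Bal.card : ℝ) *
            (Real.exp (-(s * a)) * Real.exp (s * Ef + s^2 * L * ((L:ℝ)⁻¹)^2 / 8))) := by
          ring
      _ = ((Ik C L).card : ℝ) * ((Bal.card : ℝ) * Real.exp (-2 * L * r^2)) := by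
          rw [hexp]
  have := le_of_mul_le_mul_left hfinal hILpos
  rw [hcount]
  exact this

end AuxComb

/-- joint concentration of leakage and error over random balanced
hash functions: let `C` have cardinality `L·M`, let `Pe : C → [0,1]` have average
`ε₀`, and let `G` be uniform over the balanced functions `g : C → Fin M` (all
preimages of size `L`).  Then for every `r > 0`, the probability that
`max_m d(P_{Z|G⁻¹(m)}, P_Z) ≥ r + μ` or `max_m (1/L)·∑_{x∈G⁻¹(m)} Pe(x) ≥ r + ε₀`
is at most `2M·e^{−2Lr²}`, where `μ = E[d(P_{Z|𝒜}, P_Z)]` for an i.i.d. uniform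
codebook `𝒜` of size `L`. -/
theorem joint_concentration_hash
    {C Z : Type*} [Fintype C] [Fintype Z] [DecidableEq C]
    (L M : ℕ) (hL : 0 < L) (hM : 0 < M)
    (hcard : Fintype.card C = L * M)
    (PZX : C → Z → ℝ)
    (hpos : ∀ x z, 0 ≤ PZX x z) (hsum : ∀ x, ∑ z, PZX x z = 1)
    (PZ : Z → ℝ) (hPZ : ∀ z, PZ z = (Fintype.card C : ℝ)⁻¹ * ∑ x, PZX x z)
    (Pe : C → ℝ) (hPe0 : ∀ x, 0 ≤ Pe x) (hPe1 : ∀ x, Pe x ≤ 1)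
    (ε₀ : ℝ) (hε₀ : ε₀ = (Fintype.card C : ℝ)⁻¹ * ∑ x, Pe x)
    (μ : ℝ)
    (hμ : μ = ((Fintype.card C : ℝ) ^ L)⁻¹ *
        ∑ v : Fin L → C, tv (fun z => (L : ℝ)⁻¹ * ∑ i, PZX (v i) z) PZ)
    (r : ℝ) (hr : 0 < r) :
    (((univ.filter (fun g : C → Fin M =>
          ∀ m, (univ.filter (fun x => g x = m)).card = L)).filter
        (fun g : C → Fin M =>
          (r + μ ≤ ⨆ m, tv (fun z =>
              (L : ℝ)⁻¹ * ∑ x ∈ univ.filter (fun x => g x = m), PZX x z) PZ) ∨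
          (r + ε₀ ≤ ⨆ m,
              (L : ℝ)⁻¹ * ∑ x ∈ univ.filter (fun x => g x = m), Pe x))).card : ℝ)
      / ((univ.filter (fun g : C → Fin M =>
          ∀ m, (univ.filter (fun x => g x = m)).card = L)).card : ℝ)
      ≤ 2 * (M : ℝ) * Real.exp (-2 * L * r ^ 2) := by
  have hn0 : 0 < Fintype.card C := by rw [hcard]; exact Nat.mul_pos hL hM
  haveI : Nonempty C := Fintype.card_pos_iff.1 hn0
  haveI : Nonempty (Fin M) := ⟨⟨0, hM⟩⟩
  have hLpos : (0:ℝ) < (L:ℝ) := by exact_mod_cast hL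
  set Bal : Finset (C → Fin M) := univ.filter (fun g : C → Fin M =>
    ∀ m, (univ.filter (fun x => g x = m)).card = L) with hBal
  have hBalpos : (0:ℝ) < (Bal.card : ℝ) := by
    obtain ⟨g, hg⟩ := auxBalExists L M hcard
    have : g ∈ Bal := Finset.mem_filter.2 ⟨Finset.mem_univ g, hg⟩
    exact_mod_cast Finset.card_pos.2 ⟨g, this⟩
  -- the two functionals
  set φt : (C → ℝ) → ℝ := fun w => tv (fun z => (L:ℝ)⁻¹ * ∑ x, w x * PZX x z) PZ with hφt
  set φe : (C → ℝ) → ℝ := fun w => (L:ℝ)⁻¹ * ∑ x, w x * Pe x with hφe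
  -- convexity of φt
  have hconvt : ∀ w₁ w₂ : C → ℝ, ∀ θ : ℝ, 0 ≤ θ → θ ≤ 1 →
      φt (fun c => θ * w₁ c + (1 - θ) * w₂ c) ≤ θ * φt w₁ + (1 - θ) * φt w₂ := by
    intro w1 w2 θ h0 h1
    simp only [hφt, tv]
    rw [← mul_assoc, ← mul_assoc, mul_comm θ ((1:ℝ)/2), mul_comm (1-θ) ((1:ℝ)/2),
      mul_assoc, mul_assoc, ← mul_add]
    apply mul_le_mul_of_nonneg_left _ (by norm_num : (0:ℝ) ≤ 1/2)
    rw [Finset.mul_sum, Finset.mul_sum, ← Finset.sum_add_distrib]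
    apply Finset.sum_le_sum
    intro z _
    have harg : (L:ℝ)⁻¹ * ∑ x, (θ * w1 x + (1 - θ) * w2 x) * PZX x z - PZ z
        = θ * ((L:ℝ)⁻¹ * ∑ x, w1 x * PZX x z - PZ z)
          + (1 - θ) * ((L:ℝ)⁻¹ * ∑ x, w2 x * PZX x z - PZ z) := by
      rw [Finset.sum_congr rfl (fun x _ => by ring :
        ∀ x ∈ univ, (θ * w1 x + (1 - θ) * w2 x) * PZX x z
          = θ * (w1 x * PZX x z) + (1 - θ) * (w2 x * PZX x z))]
      rw [Finset.sum_add_distrib, ← Finset.mul_sum, ← Finset.mul_sum]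
      ring
    rw [harg]
    calc |θ * ((L:ℝ)⁻¹ * ∑ x, w1 x * PZX x z - PZ z)
          + (1 - θ) * ((L:ℝ)⁻¹ * ∑ x, w2 x * PZX x z - PZ z)|
        ≤ |θ * ((L:ℝ)⁻¹ * ∑ x, w1 x * PZX x z - PZ z)|
          + |(1 - θ) * ((L:ℝ)⁻¹ * ∑ x, w2 x * PZX x z - PZ z)| := abs_add_le _ _
      _ = θ * |(L:ℝ)⁻¹ * ∑ x, w1 x * PZX x z - PZ z|
          + (1 - θ) * |(L:ℝ)⁻¹ * ∑ x, w2 x * PZX x z - PZ z| := by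
          rw [abs_mul, abs_mul, abs_of_nonneg h0, abs_of_nonneg (by linarith : (0:ℝ) ≤ 1 - θ)]
  -- convexity (equality) of φe
  have hconve : ∀ w₁ w₂ : C → ℝ, ∀ θ : ℝ, 0 ≤ θ → θ ≤ 1 →
      φe (fun c => θ * w₁ c + (1 - θ) * w₂ c) ≤ θ * φe w₁ + (1 - θ) * φe w₂ := by
    intro w1 w2 θ h0 h1
    apply le_of_eq
    simp only [hφe]
    rw [Finset.sum_congr rfl (fun x _ => by ring :
      ∀ x ∈ univ, (θ * w1 x + (1 - θ) * w2 x) * Pe x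
        = θ * (w1 x * Pe x) + (1 - θ) * (w2 x * Pe x))]
    rw [Finset.sum_add_distrib, ← Finset.mul_sum, ← Finset.mul_sum]
    ring
  -- Lipschitz of φt
  have hlipt : ∀ (v : Fin L → C) (i : Fin L) (a : C),
      φt (cnte v) - φt (cnte (Function.update v i a)) ≤ (L:ℝ)⁻¹ := by
    intro v i a
    simp only [hφt, tv]
    set A : Z → ℝ := fun z => (L:ℝ)⁻¹ * ∑ x, cnte v x * PZX x z with hA
    set B : Z → ℝ := fun z => (L:ℝ)⁻¹ * ∑ x, cnte (Function.update v i a) x * PZX x z with hB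
    have hdiff : ∀ z, A z - B z = (L:ℝ)⁻¹ * (PZX (v i) z - PZX a z) := by
      intro z
      rw [hA, hB]
      simp only
      rw [auxCnteSum v (fun x => PZX x z), auxCnteSum (Function.update v i a) (fun x => PZX x z)]
      rw [← mul_sub, ← Finset.sum_sub_distrib]
      congr 1
      rw [Finset.sum_eq_single_of_mem i (Finset.mem_univ i)]
      · rw [Function.update_self]
      · intro j _ hji
        rw [Function.update_of_ne hji, sub_self]
    have step1 : (1/2:ℝ) * ∑ z, |A z - PZ z| - (1/2) * ∑ z, |B z - PZ z|
        ≤ (1/2) * ∑ z, |A z - B z| := by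
      rw [← mul_sub, ← Finset.sum_sub_distrib]
      apply mul_le_mul_of_nonneg_left _ (by norm_num : (0:ℝ) ≤ 1/2)
      apply Finset.sum_le_sum
      intro z _
      have := abs_sub_abs_le_abs_sub (A z - PZ z) (B z - PZ z)
      simpa using this
    have step2 : (1/2:ℝ) * ∑ z, |A z - B z| ≤ (L:ℝ)⁻¹ := by
      have e1 : ∀ z, |A z - B z| ≤ (L:ℝ)⁻¹ * (PZX (v i) z + PZX a z) := by
        intro z
        rw [hdiff z, abs_mul, abs_of_nonneg (by positivity : (0:ℝ) ≤ (L:ℝ)⁻¹)]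
        apply mul_le_mul_of_nonneg_left _ (by positivity : (0:ℝ) ≤ (L:ℝ)⁻¹)
        calc |PZX (v i) z - PZX a z| ≤ |PZX (v i) z| + |PZX a z| := abs_sub _ _
          _ = PZX (v i) z + PZX a z := by
              rw [abs_of_nonneg (hpos _ _), abs_of_nonneg (hpos _ _)]
      calc (1/2:ℝ) * ∑ z, |A z - B z|
          ≤ (1/2:ℝ) * ∑ z, (L:ℝ)⁻¹ * (PZX (v i) z + PZX a z) := by
            apply mul_le_mul_of_nonneg_left (Finset.sum_le_sum fun z _ => e1 z)
              (by norm_num : (0:ℝ) ≤ 1/2)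
        _ = (L:ℝ)⁻¹ := by
            rw [← Finset.mul_sum, Finset.sum_add_distrib, hsum, hsum]
            field_simp
            ring
    linarith
  -- Lipschitz of φe
  have hlipe : ∀ (v : Fin L → C) (i : Fin L) (a : C),
      φe (cnte v) - φe (cnte (Function.update v i a)) ≤ (L:ℝ)⁻¹ := by
    intro v i a
    simp only [hφe]
    rw [auxCnteSum v Pe, auxCnteSum (Function.update v i a) Pe]
    rw [← mul_sub, ← Finset.sum_sub_distrib]
    rw [Finset.sum_eq_single_of_mem i (Finset.mem_univ i)
      (fun j _ hji => by rw [Function.update_of_ne hji, sub_self])]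
    rw [Function.update_self]
    have : Pe (v i) - Pe a ≤ 1 := by linarith [hPe1 (v i), hPe0 a]
    calc (L:ℝ)⁻¹ * (Pe (v i) - Pe a) ≤ (L:ℝ)⁻¹ * 1 :=
        mul_le_mul_of_nonneg_left this (by positivity)
      _ = (L:ℝ)⁻¹ := mul_one _
  -- identification of the means
  have hEft : ((Fintype.card C : ℝ)^L)⁻¹ * (∑ v : Fin L → C, φt (cnte v)) = μ := by
    rw [hμ]
    congr 1
    refine Finset.sum_congr rfl fun v _ => ?_
    simp only [hφt]
    congr 1
    funext z
    rw [auxCnteSum v (fun x => PZX x z)]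
  have hEfe : ((Fintype.card C : ℝ)^L)⁻¹ * (∑ v : Fin L → C, φe (cnte v)) = ε₀ := by
    rw [hε₀]
    simp only [hφe]
    have e1 : ∀ v : Fin L → C, (L:ℝ)⁻¹ * ∑ x, cnte v x * Pe x
        = (L:ℝ)⁻¹ * ∑ i, Pe (v i) := by
      intro v
      rw [auxCnteSum v Pe]
    rw [Finset.sum_congr rfl (fun v _ => e1 v), ← Finset.mul_sum]
    rw [Finset.sum_comm]
    rw [Finset.sum_congr rfl (fun i _ => auxEvalSum i Pe)]
    rw [Finset.sum_const, Finset.card_univ, Fintype.card_fin, nsmul_eq_mul]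
    have hnc : (Fintype.card C : ℝ) ^ L = (Fintype.card C : ℝ) ^ (L - 1) * (Fintype.card C : ℝ) := by
      rw [← pow_succ]
      congr 1
      omega
    rw [hnc]
    have hncpos : (0:ℝ) < (Fintype.card C : ℝ) := by exact_mod_cast hn0
    field_simp
  -- indicator form of the event values
  have hindt : ∀ (g : C → Fin M) (m : Fin M),
      tv (fun z => (L : ℝ)⁻¹ * ∑ x ∈ univ.filter (fun x => g x = m), PZX x z) PZ
      = φt (fun c => if c ∈ univ.filter (fun x => g x = m) then (1:ℝ) else 0) := by
    intro g m
    simp only [hφt]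
    congr 1
    funext z
    congr 1
    rw [Finset.sum_filter]
    refine Finset.sum_congr rfl fun x _ => ?_
    by_cases hx : g x = m
    · simp [hx]
    · simp [hx]
  have hinde : ∀ (g : C → Fin M) (m : Fin M),
      (L : ℝ)⁻¹ * ∑ x ∈ univ.filter (fun x => g x = m), Pe x
      = φe (fun c => if c ∈ univ.filter (fun x => g x = m) then (1:ℝ) else 0) := by
    intro g m
    simp only [hφe]
    congr 1
    rw [Finset.sum_filter]
    refine Finset.sum_congr rfl fun x _ => ?_
    by_cases hx : g x = m
    · simp [hx]
    · simp [hx]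
  -- union bound
  rw [div_le_iff₀ hBalpos]
  set P : (C → Fin M) → Prop := fun g =>
    r + μ ≤ ⨆ m, tv (fun z =>
      (L : ℝ)⁻¹ * ∑ x ∈ univ.filter (fun x => g x = m), PZX x z) PZ with hP
  set Q : (C → Fin M) → Prop := fun g =>
    r + ε₀ ≤ ⨆ m, (L : ℝ)⁻¹ * ∑ x ∈ univ.filter (fun x => g x = m), Pe x with hQ
  have hsplit : ((Bal.filter (fun g => P g ∨ Q g)).card : ℝ)
      ≤ ((Bal.filter P).card : ℝ) + ((Bal.filter Q).card : ℝ) := by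
    rw [Finset.filter_or]
    exact_mod_cast Finset.card_union_le _ _
  have hsubP : Bal.filter P ⊆ (univ : Finset (Fin M)).biUnion (fun m =>
      Bal.filter (fun g => r + μ ≤ tv (fun z =>
        (L : ℝ)⁻¹ * ∑ x ∈ univ.filter (fun x => g x = m), PZX x z) PZ)) := by
    intro g hg
    obtain ⟨hgB, hgP⟩ := Finset.mem_filter.1 hg
    obtain ⟨m0, hm0⟩ := Finite.exists_max (fun m => tv (fun z =>
      (L : ℝ)⁻¹ * ∑ x ∈ univ.filter (fun x => g x = m), PZX x z) PZ)
    have : r + μ ≤ tv (fun z =>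
        (L : ℝ)⁻¹ * ∑ x ∈ univ.filter (fun x => g x = m0), PZX x z) PZ :=
      le_trans hgP (ciSup_le hm0)
    exact Finset.mem_biUnion.2 ⟨m0, Finset.mem_univ m0,
      Finset.mem_filter.2 ⟨hgB, this⟩⟩
  have hsubQ : Bal.filter Q ⊆ (univ : Finset (Fin M)).biUnion (fun m =>
      Bal.filter (fun g => r + ε₀ ≤
        (L : ℝ)⁻¹ * ∑ x ∈ univ.filter (fun x => g x = m), Pe x)) := by
    intro g hg
    obtain ⟨hgB, hgQ⟩ := Finset.mem_filter.1 hg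
    obtain ⟨m0, hm0⟩ := Finite.exists_max (fun m =>
      (L : ℝ)⁻¹ * ∑ x ∈ univ.filter (fun x => g x = m), Pe x)
    have : r + ε₀ ≤ (L : ℝ)⁻¹ * ∑ x ∈ univ.filter (fun x => g x = m0), Pe x :=
      le_trans hgQ (ciSup_le hm0)
    exact Finset.mem_biUnion.2 ⟨m0, Finset.mem_univ m0,
      Finset.mem_filter.2 ⟨hgB, this⟩⟩
  -- per-m bounds
  have hboundP : ∀ m : Fin M,
      ((Bal.filter (fun g => r + μ ≤ tv (fun z =>
        (L : ℝ)⁻¹ * ∑ x ∈ univ.filter (fun x => g x = m), PZX x z) PZ)).card : ℝ)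
      ≤ (Bal.card : ℝ) * Real.exp (-2 * L * r^2) := by
    intro m
    have heq : Bal.filter (fun g => r + μ ≤ tv (fun z =>
        (L : ℝ)⁻¹ * ∑ x ∈ univ.filter (fun x => g x = m), PZX x z) PZ)
        = Bal.filter (fun g =>
          r + ((Fintype.card C : ℝ)^L)⁻¹ * (∑ v : Fin L → C, φt (cnte v))
          ≤ φt (fun c => if c ∈ univ.filter (fun x => g x = m) then (1:ℝ) else 0)) := by
      apply Finset.filter_congr
      intro g _
      rw [hEft, hindt g m]
    rw [heq]
    exact auxMain L M hL hM hcard m φt hconvt hlipt r hr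
  have hboundQ : ∀ m : Fin M,
      ((Bal.filter (fun g => r + ε₀ ≤
        (L : ℝ)⁻¹ * ∑ x ∈ univ.filter (fun x => g x = m), Pe x)).card : ℝ)
      ≤ (Bal.card : ℝ) * Real.exp (-2 * L * r^2) := by
    intro m
    have heq : Bal.filter (fun g => r + ε₀ ≤
        (L : ℝ)⁻¹ * ∑ x ∈ univ.filter (fun x => g x = m), Pe x)
        = Bal.filter (fun g =>
          r + ((Fintype.card C : ℝ)^L)⁻¹ * (∑ v : Fin L → C, φe (cnte v))
          ≤ φe (fun c => if c ∈ univ.filter (fun x => g x = m) then (1:ℝ) else 0)) := by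
      apply Finset.filter_congr
      intro g _
      rw [hEfe, hinde g m]
    rw [heq]
    exact auxMain L M hL hM hcard m φe hconve hlipe r hr
  -- put it together
  have hPcard : ((Bal.filter P).card : ℝ) ≤ (M:ℝ) * ((Bal.card : ℝ) * Real.exp (-2 * L * r^2)) := by
    calc ((Bal.filter P).card : ℝ)
        ≤ (((univ : Finset (Fin M)).biUnion (fun m =>
            Bal.filter (fun g => r + μ ≤ tv (fun z =>
              (L : ℝ)⁻¹ * ∑ x ∈ univ.filter (fun x => g x = m), PZX x z) PZ))).card : ℝ) := by
          exact_mod_cast Finset.card_le_card hsubP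
      _ ≤ ∑ m : Fin M, ((Bal.filter (fun g => r + μ ≤ tv (fun z =>
            (L : ℝ)⁻¹ * ∑ x ∈ univ.filter (fun x => g x = m), PZX x z) PZ)).card : ℝ) := by
          exact_mod_cast Finset.card_biUnion_le
      _ ≤ ∑ _m : Fin M, (Bal.card : ℝ) * Real.exp (-2 * L * r^2) :=
          Finset.sum_le_sum fun m _ => hboundP m
      _ = (M:ℝ) * ((Bal.card : ℝ) * Real.exp (-2 * L * r^2)) := by
          rw [Finset.sum_const, Finset.card_univ, Fintype.card_fin, nsmul_eq_mul]
  have hQcard : ((Bal.filter Q).card : ℝ) ≤ (M:ℝ) * ((Bal.card : ℝ) * Real.exp (-2 * L * r^2)) := by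
    calc ((Bal.filter Q).card : ℝ)
        ≤ (((univ : Finset (Fin M)).biUnion (fun m =>
            Bal.filter (fun g => r + ε₀ ≤
              (L : ℝ)⁻¹ * ∑ x ∈ univ.filter (fun x => g x = m), Pe x))).card : ℝ) := by
          exact_mod_cast Finset.card_le_card hsubQ
      _ ≤ ∑ m : Fin M, ((Bal.filter (fun g => r + ε₀ ≤
            (L : ℝ)⁻¹ * ∑ x ∈ univ.filter (fun x => g x = m), Pe x)).card : ℝ) := by
          exact_mod_cast Finset.card_biUnion_le
      _ ≤ ∑ _m : Fin M, (Bal.card : ℝ) * Real.exp (-2 * L * r^2) :=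
          Finset.sum_le_sum fun m _ => hboundQ m
      _ = (M:ℝ) * ((Bal.card : ℝ) * Real.exp (-2 * L * r^2)) := by
          rw [Finset.sum_const, Finset.card_univ, Fintype.card_fin, nsmul_eq_mul]
  calc ((Bal.filter (fun g => P g ∨ Q g)).card : ℝ)
      ≤ ((Bal.filter P).card : ℝ) + ((Bal.filter Q).card : ℝ) := hsplit
    _ ≤ (M:ℝ) * ((Bal.card : ℝ) * Real.exp (-2 * L * r^2))
        + (M:ℝ) * ((Bal.card : ℝ) * Real.exp (-2 * L * r^2)) := add_le_add hPcard hQcard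
    _ = 2 * (M : ℝ) * Real.exp (-2 * L * r ^ 2) * (Bal.card : ℝ) := by ring
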